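/- arXiv:0808.0275 — 2 statements merged into one kernel-verified Lean document; each statement's English description precedes it below -/
import Mathlib

section
/- Let (A,M) be a local ring and E a nonzero A-module with M·E = 0 (i.e., E is a vector space over A/M). Then the trivial ring extension R := A ⋉ E is a Gaussian ring if and only if A is a Gaussian ring. -/
/-- The content ideal `c(f)` of a polynomial: the ideal generated by its coefficients. -/
def contentIdeal {R : Type*} [CommRing R] (f : Polynomial R) : Ideal R :=
  Ideal.span (Set.range f.coeff)

/-- A polynomial `f` is Gaussian if `c(f*g) = c(f)*c(g)` for every polynomial `g`. -/
def IsGaussianPoly {R : Type*} [CommRing R] (f : Polynomial R) : Prop :=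
  ∀ g : Polynomial R, contentIdeal (f * g) = contentIdeal f * contentIdeal g

/-- A commutative ring is Gaussian if every polynomial over it is Gaussian. -/
def IsGaussianRing (R : Type*) [CommRing R] : Prop :=
  ∀ f : Polynomial R, IsGaussianPoly f

/-- A commutative ring is arithmetical if every finitely generated ideal is locally
principal: its extension to the localization at each maximal ideal is principal. -/
def IsArithmeticalRing (R : Type*) [CommRing R] : Prop :=
  ∀ I : Ideal R, I.FG → ∀ P : Ideal R, ∀ hP : P.IsMaximal,
    haveI := hP.isPrime
    (I.map (algebraMap R (Localization P.primeCompl))).IsPrincipal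

/-- A commutative ring is a Prüfer ring if every finitely generated ideal containing a
non-zero-divisor is invertible as a fractional ideal. -/
def IsPruferRing (R : Type*) [CommRing R] : Prop :=
  ∀ I : Ideal R, I.FG → (∃ r ∈ I, r ∈ nonZeroDivisors R) →
    IsUnit (I : FractionalIdeal (nonZeroDivisors R) (FractionRing R))

/-- An integral domain is a Prüfer domain if every nonzero finitely generated ideal is
invertible as a fractional ideal. -/
def IsPruferDomain (A : Type*) [CommRing A] [IsDomain A] : Prop :=
  ∀ I : Ideal A, I.FG → I ≠ ⊥ →
    IsUnit (I : FractionalIdeal (nonZeroDivisors A) (FractionRing A))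

/-- A commutative ring is a total ring of quotients if each of its elements is
either a unit or a zero-divisor. -/
def IsTotalRingOfQuotients (R : Type*) [CommRing R] : Prop :=
  ∀ r : R, IsUnit r ∨ r ∉ nonZeroDivisors R

/-- A commutative ring is pseudo-arithmetical if every Gaussian polynomial over it has
locally principal content ideal. -/
def IsPseudoArithmetical (R : Type*) [CommRing R] : Prop :=
  ∀ f : Polynomial R, IsGaussianPoly f → ∀ P : Ideal R, ∀ hP : P.IsMaximal,
    haveI := hP.isPrime
    ((contentIdeal f).map (algebraMap R (Localization P.primeCompl))).IsPrincipal

/-- The ideal `0 ⋉ E` of the trivial ring extension `A ⋉ E`: the ideal of elements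
with zero first component, i.e. the kernel of the projection `A ⋉ E → A`. -/
def zeroIdealTrivSqZeroExt (A E : Type*) [CommRing A] [AddCommGroup E] [Module A E]
    [Module Aᵐᵒᵖ E] [IsCentralScalar A E] : Ideal (TrivSqZeroExt A E) :=
  RingHom.ker (TrivSqZeroExt.fstHom A A E).toRingHom

open Polynomial hiding contentIdeal coeff_mem_contentIdeal
open Finset TrivSqZeroExt

section ContentLemmas
variable {R S : Type*} [CommRing R] [CommRing S]

lemma coeff_mem_contentIdeal (f : R[X]) (i : ℕ) : f.coeff i ∈ contentIdeal f :=
  Ideal.subset_span ⟨i, rfl⟩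

lemma contentIdeal_map (φ : R →+* S) (f : R[X]) :
    contentIdeal (f.map φ) = (contentIdeal f).map φ := by
  unfold contentIdeal
  rw [Ideal.map_span]
  congr 1
  have : (f.map φ).coeff = φ ∘ f.coeff := by funext n; simp [coeff_map]
  rw [this, Set.range_comp]

lemma contentIdeal_mul_le (f g : R[X]) :
    contentIdeal (f * g) ≤ contentIdeal f * contentIdeal g := by
  rw [contentIdeal, Ideal.span_le]
  rintro _ ⟨n, rfl⟩
  rw [coeff_mul]
  exact Ideal.sum_mem _ fun p _ =>
    Ideal.mul_mem_mul (coeff_mem_contentIdeal f p.1) (coeff_mem_contentIdeal g p.2)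

lemma contentIdeal_fg (f : R[X]) : (contentIdeal f).FG := by
  classical
  refine ⟨insert 0 f.coeffs, le_antisymm ?_ ?_⟩
  · rw [Ideal.span_le]
    intro x hx
    simp only [Finset.coe_insert, Set.mem_insert_iff, Finset.mem_coe] at hx
    rcases hx with rfl | hx
    · exact zero_mem _
    · obtain ⟨n, _, rfl⟩ := Polynomial.mem_coeffs_iff.mp hx
      exact coeff_mem_contentIdeal f n
  · rw [contentIdeal, Ideal.span_le]
    rintro _ ⟨n, rfl⟩
    by_cases h : f.coeff n = 0
    · rw [h]; exact zero_mem _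
    · exact Ideal.subset_span (by
        simp only [Finset.coe_insert, Set.mem_insert_iff, Finset.mem_coe]
        exact Or.inr (Polynomial.coeff_mem_coeffs h))

lemma contentIdeal_eq_top_of_isUnit_coeff {f : R[X]} {i : ℕ} (h : IsUnit (f.coeff i)) :
    contentIdeal f = ⊤ :=
  Ideal.eq_top_of_isUnit_mem _ (coeff_mem_contentIdeal f i) h

/-- Gauss's lemma over a local ring: a polynomial with a unit coefficient satisfies
`c(f*g) = c(g)` for every `g` (a consequence of Dedekind–Mertens / Nakayama). -/
lemma contentIdeal_mul_of_exists_isUnit_coeff [IsLocalRing R]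
    {f : R[X]} (hf : ∃ i, IsUnit (f.coeff i)) (g : R[X]) :
    contentIdeal (f * g) = contentIdeal g := by
  classical
  refine le_antisymm ((contentIdeal_mul_le f g).trans
    (by rw [contentIdeal_eq_top_of_isUnit_coeff hf.choose_spec, Ideal.top_mul])) ?_
  -- largest index with a unit coefficient
  obtain ⟨i₀, hi₀⟩ := hf
  set S : Finset ℕ := f.support.filter (fun i => IsUnit (f.coeff i)) with hS
  have hne : S.Nonempty := ⟨i₀, by
    simp only [hS, Finset.mem_filter, Polynomial.mem_support_iff]
    exact ⟨hi₀.ne_zero, hi₀⟩⟩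
  set d := S.max' hne with hd
  have hdu : IsUnit (f.coeff d) := (Finset.mem_filter.mp (S.max'_mem hne)).2
  have hgt : ∀ i, d < i → ¬ IsUnit (f.coeff i) := by
    intro i hdi hu
    exact absurd (S.le_max' i (by
      simp only [hS, Finset.mem_filter, Polynomial.mem_support_iff]
      exact ⟨hu.ne_zero, hu⟩)) (not_le.mpr hdi)
  set M := IsLocalRing.maximalIdeal R with hM
  set K : Ideal R := contentIdeal (f * g) ⊔ M • contentIdeal g with hK
  have key : ∀ n j, g.natDegree < j + n → g.coeff j ∈ K := by
    intro n
    induction n with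
    | zero =>
      intro j hj
      rw [Polynomial.coeff_eq_zero_of_natDegree_lt (by omega)]; exact zero_mem _
    | succ n ih =>
      intro j hj
      have hmem : (d, j) ∈ antidiagonal (d + j) := by simp [Finset.HasAntidiagonal.mem_antidiagonal]
      have hsum : f.coeff d * g.coeff j
          = (f * g).coeff (d + j)
            - ∑ p ∈ (antidiagonal (d + j)).erase (d, j), f.coeff p.1 * g.coeff p.2 := by
        rw [coeff_mul, ← Finset.add_sum_erase _ _ hmem]; ring
      have hterm : ∀ p ∈ (antidiagonal (d + j)).erase (d, j),
          f.coeff p.1 * g.coeff p.2 ∈ K := by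
        rintro ⟨a, b⟩ hp
        obtain ⟨hne', hab⟩ := Finset.mem_erase.mp hp
        rw [Finset.HasAntidiagonal.mem_antidiagonal] at hab
        rcases lt_trichotomy a d with hlt | heq | hgt'
        · exact K.mul_mem_left _ (ih b (by omega))
        · exact absurd (Prod.ext heq (by omega)) hne'
        · have hfa : f.coeff a ∈ M := IsLocalRing.mem_maximalIdeal _ |>.mpr (hgt a hgt')
          exact le_sup_right (a := contentIdeal (f * g)) <| by
            rw [Ideal.smul_eq_mul]
            exact Ideal.mul_mem_mul hfa (coeff_mem_contentIdeal g b)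
      have h1 : f.coeff d * g.coeff j ∈ K := by
        rw [hsum]
        exact sub_mem (le_sup_left (b := M • contentIdeal g)
          (coeff_mem_contentIdeal (f * g) (d + j))) (Ideal.sum_mem _ hterm)
      have := K.mul_mem_left (↑hdu.unit⁻¹) h1
      rwa [← mul_assoc, IsUnit.val_inv_mul, one_mul] at this
  have hle : contentIdeal g ≤ K := by
    rw [contentIdeal, Ideal.span_le]
    rintro _ ⟨j, rfl⟩
    exact key (g.natDegree + 1) j (by omega)
  exact Submodule.le_of_le_smul_of_le_jacobson_bot (contentIdeal_fg g)
    (IsLocalRing.jacobson_eq_maximalIdeal (⊥ : Ideal R) bot_ne_top ▸ le_rfl) hle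

end ContentLemmas

section TSZE
variable (A E : Type*) [CommRing A] [IsLocalRing A]
    [AddCommGroup E] [Module A E] [Module Aᵐᵒᵖ E] [IsCentralScalar A E]

instance : Nontrivial (TrivSqZeroExt A E) :=
  ⟨0, 1, fun h => zero_ne_one (congrArg fst h)⟩

instance : IsLocalRing (TrivSqZeroExt A E) := by
  apply IsLocalRing.of_isUnit_or_isUnit_one_sub_self
  intro a
  rcases IsLocalRing.isUnit_or_isUnit_one_sub_self (fst a) with h | h
  · exact Or.inl (isUnit_iff_isUnit_fst.mpr h)
  · exact Or.inr (isUnit_iff_isUnit_fst.mpr (by simpa using h))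

variable {A E}

lemma mul_eq_inl_mul (hME : ∀ m ∈ IsLocalRing.maximalIdeal A, ∀ e : E, m • e = 0)
    {x y : TrivSqZeroExt A E} (hx : ¬ IsUnit x.fst) (hy : ¬ IsUnit y.fst) :
    x * y = inlHom A E (x.fst * y.fst) := by
  have hx' : x.fst ∈ IsLocalRing.maximalIdeal A := hx
  have hy' : y.fst ∈ IsLocalRing.maximalIdeal A := hy
  show x * y = inl (x.fst * y.fst)
  ext
  · rw [fst_mul, fst_inl]
  · rw [snd_mul, snd_inl, op_smul_eq_smul, hME _ hx', hME _ hy', zero_add]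

lemma fstH_comp_inlHom :
    ((TrivSqZeroExt.fstHom A A E).toRingHom).comp (inlHom A E) = RingHom.id A :=
  RingHom.ext fun _ => rfl

lemma contentIdeal_map_inlHom_map_fstH (p : Polynomial A) :
    Ideal.map ((TrivSqZeroExt.fstHom A A E).toRingHom)
      (contentIdeal (p.map (inlHom A E))) = contentIdeal p := by
  rw [← contentIdeal_map, Polynomial.map_map, fstH_comp_inlHom, Polynomial.map_id]

end TSZE

/-- Let `(A,M)` be a local ring and `E` a nonzero `A`-module with `M • E = 0`.
Then the trivial ring extension `R := A ⋉ E` is a Gaussian ring iff `A` is Gaussian. -/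
theorem gaussian_trivSqZeroExt_local_iff (A E : Type*) [CommRing A] [IsLocalRing A]
    [AddCommGroup E] [Module A E] [Module Aᵐᵒᵖ E] [IsCentralScalar A E] [Nontrivial E]
    (hME : ∀ m ∈ IsLocalRing.maximalIdeal A, ∀ e : E, m • e = 0) :
    IsGaussianRing (TrivSqZeroExt A E) ↔ IsGaussianRing A := by
  constructor
  · -- R Gaussian → A Gaussian
    intro hR f g
    have h := hR (f.map (inlHom A E)) (g.map (inlHom A E))
    calc contentIdeal (f * g)
        = Ideal.map ((TrivSqZeroExt.fstHom A A E).toRingHom)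
            (contentIdeal ((f * g).map (inlHom A E))) :=
          (contentIdeal_map_inlHom_map_fstH _).symm
      _ = Ideal.map ((TrivSqZeroExt.fstHom A A E).toRingHom)
            (contentIdeal (f.map (inlHom A E) * g.map (inlHom A E))) := by
          rw [Polynomial.map_mul]
      _ = Ideal.map ((TrivSqZeroExt.fstHom A A E).toRingHom)
            (contentIdeal (f.map (inlHom A E)) * contentIdeal (g.map (inlHom A E))) := by
          rw [h]
      _ = contentIdeal f * contentIdeal g := by
          rw [Ideal.map_mul, contentIdeal_map_inlHom_map_fstH,
            contentIdeal_map_inlHom_map_fstH]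
  · -- A Gaussian → R Gaussian
    intro hA F G
    by_cases hf : ∃ i, IsUnit (F.coeff i)
    · rw [contentIdeal_mul_of_exists_isUnit_coeff hf G,
        contentIdeal_eq_top_of_isUnit_coeff hf.choose_spec, Ideal.top_mul]
    by_cases hg : ∃ j, IsUnit (G.coeff j)
    · rw [mul_comm, contentIdeal_mul_of_exists_isUnit_coeff hg F,
        contentIdeal_eq_top_of_isUnit_coeff hg.choose_spec, Ideal.mul_top]
    push_neg at hf hg
    have hf' : ∀ i, ¬ IsUnit ((F.coeff i).fst) :=
      fun i h => hf i (isUnit_iff_isUnit_fst.mpr h)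
    have hg' : ∀ j, ¬ IsUnit ((G.coeff j).fst) :=
      fun j h => hg j (isUnit_iff_isUnit_fst.mpr h)
    set f := F.map ((TrivSqZeroExt.fstHom A A E).toRingHom) with hfdef
    set g := G.map ((TrivSqZeroExt.fstHom A A E).toRingHom) with hgdef
    have hcf : ∀ i, f.coeff i = (F.coeff i).fst := fun i => coeff_map _ i
    have hcg : ∀ j, g.coeff j = (G.coeff j).fst := fun j => coeff_map _ j
    have hgen : ∀ i j, F.coeff i * G.coeff j
        = inlHom A E (f.coeff i) * inlHom A E (g.coeff j) := by
      intro i j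
      rw [← map_mul, hcf, hcg, mul_eq_inl_mul hME (hf' i) (hg' j)]
    have hFG : F * G = (f * g).map (inlHom A E) := by
      refine Polynomial.ext fun n => ?_
      rw [coeff_mul, Polynomial.coeff_map, coeff_mul, map_sum]
      exact Finset.sum_congr rfl fun p _ => by rw [hgen p.1 p.2, ← map_mul]
    have hprod : contentIdeal F * contentIdeal G
        = Ideal.map (inlHom A E) (contentIdeal f) * Ideal.map (inlHom A E) (contentIdeal g) := by
      have h1 : Ideal.map (inlHom A E) (contentIdeal f)
          = Ideal.span ((inlHom A E) '' Set.range f.coeff) := Ideal.map_span _ _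
      have h2 : Ideal.map (inlHom A E) (contentIdeal g)
          = Ideal.span ((inlHom A E) '' Set.range g.coeff) := Ideal.map_span _ _
      rw [h1, h2, contentIdeal, contentIdeal, Ideal.span_mul_span', Ideal.span_mul_span']
      refine le_antisymm (Ideal.span_le.mpr ?_) (Ideal.span_le.mpr ?_)
      · rintro z hz
        rw [Set.mem_mul] at hz
        obtain ⟨x, ⟨i, rfl⟩, y, ⟨j, rfl⟩, rfl⟩ := hz
        rw [hgen i j]
        exact Ideal.subset_span (Set.mul_mem_mul ⟨_, ⟨i, rfl⟩, rfl⟩ ⟨_, ⟨j, rfl⟩, rfl⟩)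
      · rintro z hz
        rw [Set.mem_mul] at hz
        obtain ⟨x, ⟨x', ⟨i, rfl⟩, rfl⟩, y, ⟨y', ⟨j, rfl⟩, rfl⟩, rfl⟩ := hz
        rw [← hgen i j]
        exact Ideal.subset_span (Set.mul_mem_mul ⟨i, rfl⟩ ⟨j, rfl⟩)
    calc contentIdeal (F * G)
        = Ideal.map (inlHom A E) (contentIdeal (f * g)) := by
          rw [hFG, contentIdeal_map]
      _ = Ideal.map (inlHom A E) (contentIdeal f * contentIdeal g) := by rw [hA f g]
      _ = Ideal.map (inlHom A E) (contentIdeal f) * Ideal.map (inlHom A E) (contentIdeal g) :=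
          Ideal.map_mul _ _ _
      _ = contentIdeal F * contentIdeal G := hprod.symm
end

section
/- Let K be a field and E a K-vector space with dim_K E ≥ 2. Then the trivial ring extension R := K ⋉ E is a Gaussian ring, is not arithmetical, and is a total ring of quotients (every element of R is either a unit or a zero-divisor). -/
open Polynomial TrivSqZeroExt

section Aux

variable {K E : Type*} [Field K] [AddCommGroup E] [Module K E]

/-- Key span lemma over a field. -/
lemma span_conv_eq_span (g : Polynomial K) (hg : g ≠ 0) (p : ℕ → E) (n : ℕ)
    (hp : ∀ i, n ≤ i → p i = 0) :
    Submodule.span K (Set.range fun k => ∑ x ∈ Finset.HasAntidiagonal.antidiagonal k, g.coeff x.2 • p x.1)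
      = Submodule.span K (Set.range p) := by
  set W := Submodule.span K
    (Set.range fun k => ∑ x ∈ Finset.HasAntidiagonal.antidiagonal k, g.coeff x.2 • p x.1) with hW
  apply le_antisymm
  · rw [Submodule.span_le]
    rintro _ ⟨k, rfl⟩
    exact Submodule.sum_mem _ fun x _ =>
      Submodule.smul_mem _ _ (Submodule.subset_span ⟨x.1, rfl⟩)
  · rw [Submodule.span_le]
    rintro _ ⟨i, rfl⟩
    show p i ∈ W
    rw [← Submodule.Quotient.mk_eq_zero W]
    rw [← Module.forall_dual_apply_eq_zero_iff K]
    intro φ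
    set ψ : E →ₗ[K] K := φ.comp W.mkQ with hψ
    have hc : ∀ k, ψ (∑ x ∈ Finset.HasAntidiagonal.antidiagonal k, g.coeff x.2 • p x.1) = 0 := by
      intro k
      have h1 : (∑ x ∈ Finset.HasAntidiagonal.antidiagonal k, g.coeff x.2 • p x.1) ∈ W :=
        Submodule.subset_span ⟨k, rfl⟩
      simp only [hψ, LinearMap.comp_apply, Submodule.mkQ_apply]
      rw [(Submodule.Quotient.mk_eq_zero W).2 h1, map_zero]
    set q : Polynomial K := ∑ j ∈ Finset.range n, Polynomial.monomial j (ψ (p j)) with hq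
    have hqc : ∀ i, q.coeff i = ψ (p i) := by
      intro i
      rw [hq, Polynomial.finset_sum_coeff]
      simp only [Polynomial.coeff_monomial]
      rw [Finset.sum_ite_eq' (Finset.range n) i fun j => ψ (p j)]
      by_cases h : i ∈ Finset.range n
      · rw [if_pos h]
      · rw [if_neg h, hp i (by simpa using h), map_zero]
    have hqg : q * g = 0 := by
      ext k
      rw [Polynomial.coeff_mul, Polynomial.coeff_zero]
      have := hc k
      rw [map_sum] at this
      simp_rw [map_smul, smul_eq_mul] at this
      rw [← this]
      exact Finset.sum_congr rfl fun x _ => by rw [hqc, mul_comm]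
    have hq0 : q = 0 := by
      rcases mul_eq_zero.mp hqg with h | h
      · exact h
      · exact absurd h hg
    have : ψ (p i) = 0 := by rw [← hqc, hq0, Polynomial.coeff_zero]
    simpa [hψ] using this

variable [Module Kᵐᵒᵖ E] [IsCentralScalar K E]

lemma mem_span_fstZero (S : Set (TrivSqZeroExt K E))
    (hS : ∀ s ∈ S, s.fst = 0) (x : TrivSqZeroExt K E) :
    x ∈ Ideal.span S ↔ x.fst = 0 ∧ x.snd ∈ Submodule.span K (TrivSqZeroExt.snd '' S) := by
  constructor
  · intro hx
    refine Submodule.span_induction ?_ ?_ ?_ ?_ hx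
    · intro s hs
      exact ⟨hS s hs, Submodule.subset_span ⟨s, hs, rfl⟩⟩
    · exact ⟨rfl, by simp⟩
    · rintro a b _ _ ⟨ha1, ha2⟩ ⟨hb1, hb2⟩
      exact ⟨by simp [ha1, hb1], by simpa using Submodule.add_mem _ ha2 hb2⟩
    · rintro r a _ ⟨ha1, ha2⟩
      refine ⟨by simp [smul_eq_mul, ha1], ?_⟩
      have : (r • a).snd = r.fst • a.snd := by
        simp [smul_eq_mul, ha1, op_smul_eq_smul]
      rw [this]
      exact Submodule.smul_mem _ _ ha2
  · rintro ⟨h1, h2⟩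
    have hx : x = inr x.snd := TrivSqZeroExt.ext (by simp [h1]) rfl
    rw [hx]
    clear hx h1
    refine Submodule.span_induction ?_ ?_ ?_ ?_ h2
    · rintro _ ⟨s, hs, rfl⟩
      have : inr s.snd = s := TrivSqZeroExt.ext (by simp [hS s hs]) rfl
      rw [this]
      exact Ideal.subset_span hs
    · simp
    · intro a b _ _ ha hb
      rw [inr_add]
      exact Ideal.add_mem _ ha hb
    · intro c a _ ha
      rw [← inl_mul_inr]
      exact Ideal.mul_mem_left _ _ ha

lemma tsze_mul_eq_zero {x y : TrivSqZeroExt K E} (hx : x.fst = 0) (hy : y.fst = 0) :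
    x * y = 0 :=
  TrivSqZeroExt.ext (by simp [hx]) (by simp [hx, hy])

lemma content_eq_top {f : Polynomial (TrivSqZeroExt K E)} {k : ℕ}
    (hk : (f.coeff k).fst ≠ 0) : _root_.contentIdeal f = ⊤ :=
  Ideal.eq_top_of_isUnit_mem _ (Ideal.subset_span ⟨k, rfl⟩)
    (isUnit_iff_isUnit_fst.2 (isUnit_iff_ne_zero.2 hk))

lemma content_of_fstZero (f : Polynomial (TrivSqZeroExt K E))
    (hf : ∀ i, (f.coeff i).fst = 0) (x : TrivSqZeroExt K E) :
    x ∈ _root_.contentIdeal f ↔ x.fst = 0 ∧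
      x.snd ∈ Submodule.span K (Set.range fun i => (f.coeff i).snd) := by
  rw [_root_.contentIdeal, mem_span_fstZero _ (by rintro _ ⟨i, rfl⟩; exact hf i)]
  rw [← Set.range_comp]
  rfl

lemma gaussian_tsze : IsGaussianRing (TrivSqZeroExt K E) := by
  set R := TrivSqZeroExt K E
  set ρ := (TrivSqZeroExt.fstHom K K E).toRingHom with hρ
  have hρap : ∀ x : R, ρ x = x.fst := fun _ => rfl
  have hmap : ∀ h : Polynomial R, h.map ρ = 0 ↔ ∀ i, (h.coeff i).fst = 0 := by
    intro h
    simp [Polynomial.ext_iff, Polynomial.coeff_map, hρap]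
  intro f g
  by_cases hf : f.map ρ = 0
  · by_cases hg : g.map ρ = 0
    · -- both in M : product is zero
      have hf' := (hmap f).1 hf
      have hg' := (hmap g).1 hg
      have hfg : f * g = 0 := by
        refine Polynomial.ext fun k => ?_
        rw [Polynomial.coeff_mul, Polynomial.coeff_zero]
        exact Finset.sum_eq_zero fun (x : ℕ × ℕ) _ => tsze_mul_eq_zero (hf' x.1) (hg' x.2)
      rw [hfg]
      have h1 : _root_.contentIdeal (0 : Polynomial R) = ⊥ := by
        rw [_root_.contentIdeal, Ideal.span_eq_bot]
        rintro _ ⟨k, rfl⟩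
        simp
      rw [h1]
      symm
      rw [_root_.contentIdeal, _root_.contentIdeal, Ideal.span_mul_span', Ideal.span_eq_bot]
      rintro x hx
      rw [Set.mem_mul] at hx
      obtain ⟨a, ⟨i, rfl⟩, b, ⟨j, rfl⟩, rfl⟩ := hx
      exact tsze_mul_eq_zero (hf' i) (hg' j)
    · -- f in M, g not
      have hf' := (hmap f).1 hf
      obtain ⟨j, hj⟩ : ∃ j, (g.coeff j).fst ≠ 0 := by
        by_contra h
        push_neg at h
        exact hg ((hmap g).2 h)
      rw [content_eq_top hj, Ideal.mul_top]
      have hfg' : ∀ i, ((f * g).coeff i).fst = 0 := by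
        intro i
        have : (f * g).map ρ = 0 := by rw [Polynomial.map_mul, hf, zero_mul]
        exact (hmap _).1 this i
      have hsnd : ∀ k, ((f * g).coeff k).snd
          = ∑ x ∈ Finset.HasAntidiagonal.antidiagonal k, ((g.map ρ).coeff x.2) • (f.coeff x.1).snd := by
        intro k
        rw [Polynomial.coeff_mul, TrivSqZeroExt.snd_sum]
        refine Finset.sum_congr rfl fun (x : ℕ × ℕ) _ => ?_
        simp [hf' x.1, op_smul_eq_smul, Polynomial.coeff_map, hρap]
      have hspan : Submodule.span K (Set.range fun k => ((f * g).coeff k).snd)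
          = Submodule.span K (Set.range fun i => (f.coeff i).snd) := by
        rw [show (fun k => ((f * g).coeff k).snd)
            = (fun k => ∑ x ∈ Finset.HasAntidiagonal.antidiagonal k,
              ((g.map ρ).coeff x.2) • (f.coeff x.1).snd) from funext hsnd]
        exact span_conv_eq_span (g.map ρ) hg (fun i => (f.coeff i).snd)
          (f.natDegree + 1) (fun i hi => by
            have h0 : f.coeff i = 0 := Polynomial.coeff_eq_zero_of_natDegree_lt (by omega)
            simp [h0])
      ext x
      rw [content_of_fstZero _ hfg', content_of_fstZero _ hf', hspan]
  · by_cases hg : g.map ρ = 0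
    · -- g in M, f not : use commutativity
      have hg' := (hmap g).1 hg
      obtain ⟨j, hj⟩ : ∃ j, (f.coeff j).fst ≠ 0 := by
        by_contra h
        push_neg at h
        exact hf ((hmap f).2 h)
      rw [content_eq_top hj, Ideal.top_mul]
      have hfg' : ∀ i, ((g * f).coeff i).fst = 0 := by
        intro i
        have : (g * f).map ρ = 0 := by rw [Polynomial.map_mul, hg, zero_mul]
        exact (hmap _).1 this i
      have hsnd : ∀ k, ((g * f).coeff k).snd
          = ∑ x ∈ Finset.HasAntidiagonal.antidiagonal k, ((f.map ρ).coeff x.2) • (g.coeff x.1).snd := by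
        intro k
        rw [Polynomial.coeff_mul, TrivSqZeroExt.snd_sum]
        refine Finset.sum_congr rfl fun (x : ℕ × ℕ) _ => ?_
        simp [hg' x.1, op_smul_eq_smul, Polynomial.coeff_map, hρap]
      have hspan : Submodule.span K (Set.range fun k => ((g * f).coeff k).snd)
          = Submodule.span K (Set.range fun i => (g.coeff i).snd) := by
        rw [show (fun k => ((g * f).coeff k).snd)
            = (fun k => ∑ x ∈ Finset.HasAntidiagonal.antidiagonal k,
              ((f.map ρ).coeff x.2) • (g.coeff x.1).snd) from funext hsnd]
        exact span_conv_eq_span (f.map ρ) hf (fun i => (g.coeff i).snd)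
          (g.natDegree + 1) (fun i hi => by
            have h0 : g.coeff i = 0 := Polynomial.coeff_eq_zero_of_natDegree_lt (by omega)
            simp [h0])
      rw [mul_comm f g]
      ext x
      rw [content_of_fstZero _ hfg', content_of_fstZero _ hg', hspan]
    · -- neither in M
      obtain ⟨j, hj⟩ : ∃ j, (f.coeff j).fst ≠ 0 := by
        by_contra h; push_neg at h; exact hf ((hmap f).2 h)
      obtain ⟨l, hl⟩ : ∃ l, (g.coeff l).fst ≠ 0 := by
        by_contra h; push_neg at h; exact hg ((hmap g).2 h)
      have hfg : (f * g).map ρ ≠ 0 := by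
        rw [Polynomial.map_mul]
        exact mul_ne_zero hf hg
      obtain ⟨k, hk⟩ : ∃ k, ((f * g).coeff k).fst ≠ 0 := by
        by_contra h; push_neg at h; exact hfg ((hmap _).2 h)
      rw [content_eq_top hk, content_eq_top hj, content_eq_top hl, Ideal.top_mul]

end Aux

/-- Let `K` be a field and `E` a `K`-vector space with `dim_K E ≥ 2`. Then
`R := K ⋉ E` is a Gaussian ring, is not arithmetical, and is a total ring of quotients. -/
theorem trivSqZeroExt_field_rank_ge_two (K E : Type*) [Field K]
    [AddCommGroup E] [Module K E] [Module Kᵐᵒᵖ E] [IsCentralScalar K E]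
    (hrank : 2 ≤ Module.rank K E) :
    IsGaussianRing (TrivSqZeroExt K E) ∧ ¬ IsArithmeticalRing (TrivSqZeroExt K E) ∧
      IsTotalRingOfQuotients (TrivSqZeroExt K E) := by
  set R := TrivSqZeroExt K E
  obtain ⟨b, hli⟩ : ∃ b : Fin 2 → E, LinearIndependent K b :=
    exists_linearIndependent_of_le_rank (by exact_mod_cast hrank)
  have hv0 : b 0 ≠ 0 := hli.ne_zero 0
  refine ⟨gaussian_tsze, ?_, ?_⟩
  · -- not arithmetical
    intro hA
    set M : Ideal R := zeroIdealTrivSqZeroExt K E with hM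
    have hMmem : ∀ x : R, x ∈ M ↔ x.fst = 0 := by
      intro x
      rw [hM, zeroIdealTrivSqZeroExt, RingHom.mem_ker]
      rfl
    have hMmax : M.IsMaximal :=
      RingHom.ker_isMaximal_of_surjective _ (fun a => ⟨inl a, rfl⟩)
    set I : Ideal R := Ideal.span {inr (b 0), inr (b 1)} with hI
    have hIfg : I.FG := by
      classical
      exact ⟨{inr (b 0), inr (b 1)}, by simp [hI]⟩
    have hP := hA I hIfg M hMmax
    set L := Localization M.primeCompl
    have hunits : M.primeCompl ≤ IsUnit.submonoid R := by
      intro x hx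
      have : x.fst ≠ 0 := fun h => hx ((hMmem x).2 h)
      exact isUnit_iff_isUnit_fst.2 (isUnit_iff_ne_zero.2 this)
    have hbij : Function.Bijective (algebraMap R L) := by
      have := (IsLocalization.atUnits R M.primeCompl (S := L) hunits).bijective
      rwa [show ⇑(IsLocalization.atUnits R M.primeCompl (S := L) hunits)
        = ⇑(algebraMap R L) from rfl] at this
    obtain ⟨y, hy⟩ := hP
    rw [Ideal.submodule_span_eq] at hy
    obtain ⟨x, rfl⟩ := hbij.2 y
    have hIx : I = Ideal.span {x} := by
      have h1 := Ideal.comap_map_of_bijective (algebraMap R L) hbij (I := I)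
      rw [hy] at h1
      rw [← h1]
      ext z
      rw [Ideal.mem_comap, Ideal.mem_span_singleton, Ideal.mem_span_singleton]
      constructor
      · rintro ⟨c, hc⟩
        obtain ⟨c', rfl⟩ := hbij.2 c
        rw [← map_mul] at hc
        exact ⟨c', hbij.1 hc⟩
      · rintro ⟨c, rfl⟩
        exact ⟨algebraMap R L c, (map_mul _ _ _)⟩
    have hSfst : ∀ s ∈ ({inr (b 0), inr (b 1)} : Set R), TrivSqZeroExt.fst s = 0 := by
      rintro s (rfl | rfl) <;> simp
    have hxI : x ∈ I := hIx ▸ Ideal.mem_span_singleton_self x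
    have hxf : x.fst = 0 := ((mem_span_fstZero _ hSfst x).1 (hI ▸ hxI)).1
    have hvI : inr (b 0) ∈ Ideal.span {x} := hIx ▸ Ideal.subset_span (by simp)
    have hwI : inr (b 1) ∈ Ideal.span {x} := hIx ▸ Ideal.subset_span (by simp)
    obtain ⟨r, hr⟩ := Ideal.mem_span_singleton'.1 hvI
    obtain ⟨s, hs⟩ := Ideal.mem_span_singleton'.1 hwI
    have hv : r.fst • x.snd = b 0 := by
      have := congrArg TrivSqZeroExt.snd hr
      simpa [hxf] using this
    have hw : s.fst • x.snd = b 1 := by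
      have := congrArg TrivSqZeroExt.snd hs
      simpa [hxf] using this
    have hcomb : ∑ i : Fin 2, (![s.fst, -r.fst] i) • b i = 0 := by
      rw [Fin.sum_univ_two]
      simp only [Matrix.cons_val_zero, Matrix.cons_val_one, Matrix.head_cons]
      rw [← hv, ← hw, smul_smul, neg_smul, smul_smul, mul_comm]
      abel
    have hzero := Fintype.linearIndependent_iff.1 hli ![s.fst, -r.fst] hcomb
    have hr0 : r.fst = 0 := by
      have := hzero 1
      simpa using this
    exact hv0 (by rw [← hv, hr0, zero_smul])
  · -- total ring of quotients
    intro r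
    by_cases hr : r.fst = 0
    · right
      intro hmem
      have h1 : inr (b 0) * r = 0 :=
        TrivSqZeroExt.ext (by simp) (by simp [hr])
      have h2 := (mem_nonZeroDivisors_iff.1 hmem).2 _ h1
      exact hv0 (by simpa using congrArg TrivSqZeroExt.snd h2)
    · left
      exact isUnit_iff_isUnit_fst.2 (isUnit_iff_ne_zero.2 hr)
end
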